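/- Let H be a complex Hilbert space, (u_n)_{n≥1} an orthonormal (Hilbert) basis of H, T a bounded bijective linear operator on H, and set g_n := T u_n (so (g_n) is a Riesz basis for H). Let (g̃_n)_{n≥1} be a sequence in H biorthogonal to (g_n) (⟨g_m, g̃_n⟩ = 1 if m = n and 0 otherwise) such that every f ∈ H satisfies f = Σ_{n=1}^∞ ⟨f, g̃_n⟩ g_n with convergence in H. Let (e_n)_{n≥1} be a frame for H, let β ∈ (0,1], γ > 0, C > 0 with |⟨e_m, g_n⟩| ≤ C·e^{−γ|m−n|^β} and |⟨e_m, g̃_n⟩| ≤ C·e^{−γ|m−n|^β} for all m, n. Let μ be a β_μ-sub-exponential weight with β_μ < β and μ(n) ≥ 1 for all n ∈ ℕ, and let p ∈ [1,∞). Then there exists K > 0 such that for every f ∈ H with Σ_n |⟨f, g̃_n⟩|^p μ(n)^p < ∞, one has Σ_m |⟨f, e_m⟩|^p μ(m)^p ≤ K^p · Σ_n |⟨f, g̃_n⟩|^p μ(n)^p. That is, the analysis operator U_E f = (⟨f, e_m⟩)_{m≥1} maps H_G^{ℓ^p_μ} boundedly into ℓ^p_μ. -/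

import Mathlib

open Real Filter Asymptotics MeasureTheory

lemma aux_summable_exp_nat (c β : ℝ) (hc : 0 < c) (hβ : 0 < β) :
    Summable (fun n : ℕ => Real.exp (-(c * (n:ℝ) ^ β))) := by
  have hlog : ∀ᶠ x : ℝ in atTop, ‖Real.log x‖ ≤ (c/2) * ‖x ^ β‖ :=
    (isLittleO_log_rpow_atTop hβ).def (by positivity)
  have hbig : ∀ᶠ x : ℝ in atTop, Real.exp (-(c * x ^ β)) ≤ 1 / x ^ (2:ℕ) := by
    filter_upwards [hlog, eventually_ge_atTop (1:ℝ)] with x hx hx1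
    have hx0 : 0 < x := lt_of_lt_of_le one_pos hx1
    have hlx : 0 ≤ Real.log x := Real.log_nonneg hx1
    have hrp : 0 ≤ x ^ β := Real.rpow_nonneg hx0.le β
    rw [Real.norm_eq_abs, Real.norm_eq_abs, abs_of_nonneg hlx, abs_of_nonneg hrp] at hx
    have h2 : 2 * Real.log x ≤ c * x ^ β := by linarith
    have hx2 : x ^ (2:ℕ) = Real.exp (2 * Real.log x) := by
      rw [mul_comm, Real.exp_mul, Real.exp_log hx0]; norm_num
    rw [hx2, one_div, ← Real.exp_neg]
    exact Real.exp_le_exp.mpr (by linarith)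
  have hN := (tendsto_natCast_atTop_atTop (R := ℝ)).eventually hbig
  apply summable_of_isBigO_nat (g := fun n : ℕ => 1 / (n:ℝ) ^ (2:ℕ))
  · exact (Real.summable_one_div_nat_pow).mpr (by norm_num)
  · refine IsBigO.of_bound 1 ?_
    filter_upwards [hN, eventually_ge_atTop 1] with n hn hn1
    have h1 : (0:ℝ) ≤ 1 / (n:ℝ)^(2:ℕ) := by positivity
    rw [one_mul, Real.norm_eq_abs, Real.norm_eq_abs, abs_of_pos (Real.exp_pos _),
      abs_of_nonneg h1]
    exact hn

lemma aux_summable_exp_int (c β : ℝ) (h : Summable (fun n : ℕ => Real.exp (-(c * (n:ℝ) ^ β)))) :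
    Summable (fun j : ℤ => Real.exp (-(c * |(j:ℝ)| ^ β))) := by
  apply Summable.of_nat_of_neg
  · exact h.congr (by intro n; simp)
  · exact h.congr (by intro n; simp)

lemma aux_schur_step (p q : ℝ) (hpq : p.HolderConjugate q) (k b : ℕ → ENNReal)
    (hk0 : ∀ n, k n ≠ 0) (hktop : ∀ n, k n ≠ ⊤) :
    (∑' n, k n * b n) ^ p ≤ (∑' n, k n) ^ (p - 1) * ∑' n, k n * b n ^ p := by
  have hmeas : ∀ F : ℕ → ENNReal, AEMeasurable F (Measure.count) := fun F =>
    (measurable_from_top).aemeasurable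
  have key : ∑' n, k n * b n
      ≤ (∑' n, k n * b n ^ p) ^ (1/p) * (∑' n, k n) ^ (1/q) := by
    have h := ENNReal.lintegral_mul_le_Lp_mul_Lq (Measure.count (α := ℕ)) hpq
      (hmeas (fun n => (k n) ^ (1/p) * b n)) (hmeas (fun n => (k n) ^ (1/q)))
    rw [lintegral_count, lintegral_count, lintegral_count] at h
    have e1 : ∀ n : ℕ, ((fun n => (k n) ^ (1/p) * b n) * fun n => (k n) ^ (1/q)) n
        = k n * b n := by
      intro n
      have : (k n) ^ (1/p) * (k n) ^ (1/q) = k n := by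
        rw [← ENNReal.rpow_add _ _ (hk0 n) (hktop n)]
        rw [one_div, one_div, hpq.inv_add_inv_eq_one, ENNReal.rpow_one]
      simp only [Pi.mul_apply]
      rw [mul_assoc, mul_comm (b n), ← mul_assoc, this]
    have e2 : ∀ n : ℕ, ((k n) ^ (1/p) * b n) ^ p = k n * b n ^ p := by
      intro n
      rw [ENNReal.mul_rpow_of_nonneg _ _ hpq.nonneg, ← ENNReal.rpow_mul,
        one_div, inv_mul_cancel₀ hpq.ne_zero, ENNReal.rpow_one]
    have e3 : ∀ n : ℕ, ((k n) ^ (1/q)) ^ q = k n := by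
      intro n
      rw [← ENNReal.rpow_mul, one_div, inv_mul_cancel₀ hpq.symm.ne_zero,
        ENNReal.rpow_one]
    calc ∑' n, k n * b n = ∑' n, ((fun n => (k n) ^ (1/p) * b n) * fun n => (k n) ^ (1/q)) n := by
          exact tsum_congr fun n => (e1 n).symm
      _ ≤ (∑' n, ((k n) ^ (1/p) * b n) ^ p) ^ (1/p) * (∑' n, ((k n) ^ (1/q)) ^ q) ^ (1/q) := h
      _ = (∑' n, k n * b n ^ p) ^ (1/p) * (∑' n, k n) ^ (1/q) := by
          rw [tsum_congr e2, tsum_congr e3]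
  calc (∑' n, k n * b n) ^ p
      ≤ ((∑' n, k n * b n ^ p) ^ (1/p) * (∑' n, k n) ^ (1/q)) ^ p :=
        ENNReal.rpow_le_rpow key hpq.nonneg
    _ = (∑' n, k n) ^ (p - 1) * ∑' n, k n * b n ^ p := by
        have hq : q⁻¹ * p = p - 1 := by
          have h1 : q⁻¹ = 1 - p⁻¹ := by linarith [hpq.inv_add_inv_eq_one]
          rw [h1, sub_mul, one_mul, inv_mul_cancel₀ hpq.ne_zero]
        rw [ENNReal.mul_rpow_of_nonneg _ _ hpq.nonneg, ← ENNReal.rpow_mul,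
          ← ENNReal.rpow_mul, one_div, one_div, inv_mul_cancel₀ hpq.ne_zero,
          ENNReal.rpow_one, hq, mul_comm]

lemma aux_schur_step' (p : ℝ) (hp : 1 ≤ p) (k b : ℕ → ENNReal)
    (hk0 : ∀ n, k n ≠ 0) (hktop : ∀ n, k n ≠ ⊤) :
    (∑' n, k n * b n) ^ p ≤ (∑' n, k n) ^ (p - 1) * ∑' n, k n * b n ^ p := by
  rcases eq_or_lt_of_le hp with h1 | h1
  · subst h1
    simp [ENNReal.rpow_one]
  · exact aux_schur_step p _ (Real.HolderConjugate.conjExponent h1) k b hk0 hktop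



/-- Analysis operator boundedness: if a frame `(e_n)` is `β`-sub-exponentially (or
exponentially) localized with respect to a Riesz basis `(g_n)` with canonical dual
`(g̃_n)`, and `μ` is a `β_μ`-sub-exponential weight with `β_μ < β` and `μ(n) ≥ 1`,
then the analysis operator `f ↦ (⟨f,e_m⟩)_m` maps `H_G^{ℓ^p_μ}` boundedly into
`ℓ^p_μ`. -/
theorem stmt_16 {H : Type*} [NormedAddCommGroup H] [InnerProductSpace ℂ H]
    [CompleteSpace H]
    (u : HilbertBasis ℕ ℂ H) (T : H →L[ℂ] H) (hT : Function.Bijective T)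
    (g : ℕ → H) (hg : ∀ n, g n = T (u n))
    (gd : ℕ → H)
    (hbi : ∀ m n : ℕ, (inner ℂ (g m) (gd n) : ℂ) = if m = n then 1 else 0)
    (hexp : ∀ f : H, HasSum (fun n : ℕ => (inner ℂ f (gd n) : ℂ) • g n) f)
    (e : ℕ → H)
    (hframe : ∃ A B : ℝ, 0 < A ∧ A ≤ B ∧ ∀ f : H,
      Summable (fun n : ℕ => ‖(inner ℂ f (e n) : ℂ)‖ ^ 2) ∧
      A * ‖f‖ ^ 2 ≤ ∑' n : ℕ, ‖(inner ℂ f (e n) : ℂ)‖ ^ 2 ∧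
      ∑' n : ℕ, ‖(inner ℂ f (e n) : ℂ)‖ ^ 2 ≤ B * ‖f‖ ^ 2)
    (β γ C : ℝ) (hβ₀ : 0 < β) (hβ₁ : β ≤ 1) (hγ : 0 < γ) (hC : 0 < C)
    (hloc1 : ∀ m n : ℕ,
      ‖(inner ℂ (e m) (g n) : ℂ)‖ ≤ C * Real.exp (-γ * |(m:ℝ) - (n:ℝ)| ^ β))
    (hloc2 : ∀ m n : ℕ,
      ‖(inner ℂ (e m) (gd n) : ℂ)‖ ≤ C * Real.exp (-γ * |(m:ℝ) - (n:ℝ)| ^ β))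
    (μ : ℝ → ℝ) (hμpos : ∀ x, 0 < μ x) (hμcont : Continuous μ)
    (βμ : ℝ) (hβμ₀ : 0 < βμ) (hβμ₁ : βμ < 1) (hβμβ : βμ < β)
    (hsub : ∃ Cμ > (0:ℝ), ∃ γ' > (0:ℝ), ∀ t x : ℝ,
      μ (t + x) ≤ Cμ * Real.exp (γ' * |t| ^ βμ) * μ x)
    (hμ1 : ∀ n : ℕ, 1 ≤ μ ((n:ℝ) + 1))
    (p : ℝ) (hp : 1 ≤ p) :
    ∃ K > (0:ℝ), ∀ f : H,
      Summable (fun n : ℕ => ‖(inner ℂ f (gd n) : ℂ)‖ ^ p * μ ((n:ℝ) + 1) ^ p) →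
      Summable (fun m : ℕ => ‖(inner ℂ f (e m) : ℂ)‖ ^ p * μ ((m:ℝ) + 1) ^ p) ∧
      ∑' m : ℕ, ‖(inner ℂ f (e m) : ℂ)‖ ^ p * μ ((m:ℝ) + 1) ^ p
        ≤ K ^ p * ∑' n : ℕ, ‖(inner ℂ f (gd n) : ℂ)‖ ^ p * μ ((n:ℝ) + 1) ^ p := by
  obtain ⟨Cμ, hCμ, γ', hγ', hμsub⟩ := hsub
  have hp0 : 0 < p := lt_of_lt_of_le one_pos hp
  set δ : ℝ := γ / 2 with hδdef
  have hδpos : 0 < δ := by positivity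
  have hβδ : 0 < β - βμ := sub_pos.mpr hβμβ
  -- the constant D with γ' s^βμ ≤ δ s^β + D for s ≥ 0
  obtain ⟨D, hD0, hD⟩ : ∃ D : ℝ, 0 ≤ D ∧ ∀ s : ℝ, 0 ≤ s → γ' * s ^ βμ ≤ δ * s ^ β + D := by
    set T₀ : ℝ := max 1 ((γ'/δ) ^ (β - βμ)⁻¹) with hT₀
    have hT₀1 : (1:ℝ) ≤ T₀ := le_max_left _ _
    have hT₀0 : (0:ℝ) < T₀ := lt_of_lt_of_le one_pos hT₀1
    refine ⟨γ' * T₀ ^ βμ, by positivity, fun s hs => ?_⟩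
    rcases le_total s T₀ with h | h
    · have h2 : γ' * s ^ βμ ≤ γ' * T₀ ^ βμ :=
        mul_le_mul_of_nonneg_left (Real.rpow_le_rpow hs h hβμ₀.le) hγ'.le
      have h3 : 0 ≤ δ * s ^ β := mul_nonneg hδpos.le (Real.rpow_nonneg hs β)
      linarith
    · have hs1 : (1:ℝ) ≤ s := hT₀1.trans h
      have hs0 : (0:ℝ) < s := lt_of_lt_of_le one_pos hs1
      have h2 : (γ'/δ) ^ (β - βμ)⁻¹ ≤ s := (le_max_right _ _).trans h
      have h3 : γ'/δ ≤ s ^ (β - βμ) := by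
        have h4 := Real.rpow_le_rpow (Real.rpow_nonneg (by positivity) _) h2 hβδ.le
        rwa [Real.rpow_inv_rpow (by positivity) hβδ.ne'] at h4
      have h5 : γ' * s ^ βμ ≤ δ * s ^ β := by
        have h6 : γ' ≤ δ * s ^ (β - βμ) := by
          rw [div_le_iff₀ hδpos] at h3; linarith [h3]
        have h7 : s ^ (β - βμ) * s ^ βμ = s ^ β := by
          rw [← Real.rpow_add hs0]; ring_nf
        calc γ' * s ^ βμ ≤ δ * s ^ (β - βμ) * s ^ βμ :=
              mul_le_mul_of_nonneg_right h6 (Real.rpow_nonneg hs0.le _)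
          _ = δ * s ^ β := by rw [mul_assoc, h7]
      have h8 : 0 ≤ γ' * T₀ ^ βμ := by positivity
      linarith
  set C₀ : ℝ := C * Cμ * Real.exp D with hC₀def
  have hC₀ : 0 < C₀ := by positivity
  have hκpos : ∀ t : ℝ, 0 < C₀ * Real.exp (-(δ * |t| ^ β)) := fun t => by positivity
  -- kernel domination
  have hker : ∀ m n : ℕ,
      C * Real.exp (-γ * |(m:ℝ) - (n:ℝ)| ^ β) *
        (Cμ * Real.exp (γ' * |(m:ℝ) - (n:ℝ)| ^ βμ))
        ≤ C₀ * Real.exp (-(δ * |(m:ℝ) - (n:ℝ)| ^ β)) := by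
    intro m n
    set s : ℝ := |(m:ℝ) - (n:ℝ)| with hsdef
    have hs : 0 ≤ s := abs_nonneg _
    have h1 := hD s hs
    calc C * Real.exp (-γ * s ^ β) * (Cμ * Real.exp (γ' * s ^ βμ))
        = C * Cμ * Real.exp (-γ * s ^ β + γ' * s ^ βμ) := by
          rw [Real.exp_add]; ring
      _ ≤ C * Cμ * Real.exp (D + -(δ * s ^ β)) := by
          have : -γ * s ^ β + γ' * s ^ βμ ≤ D + -(δ * s ^ β) := by
            have hsβ : 0 ≤ s ^ β := Real.rpow_nonneg hs β
            rw [hδdef] at h1 ⊢; linarith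
          exact mul_le_mul_of_nonneg_left (Real.exp_le_exp.mpr this) (by positivity)
      _ = C₀ * Real.exp (-(δ * s ^ β)) := by rw [hC₀def, Real.exp_add]; ring
  -- summability of the kernel
  have hsumN : Summable (fun n : ℕ => Real.exp (-(δ * (n:ℝ) ^ β))) :=
    aux_summable_exp_nat δ β hδpos hβ₀
  have hsumZ : Summable (fun j : ℤ => Real.exp (-(δ * |(j:ℝ)| ^ β))) :=
    aux_summable_exp_int δ β hsumN
  have hshift : ∀ z : ℤ, Summable (fun n : ℕ => Real.exp (-(δ * |(z:ℝ) - (n:ℝ)| ^ β))) := by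
    intro z
    have hinj : Function.Injective (fun n : ℕ => z - (n:ℤ)) := by
      intro a b hab; simp only [sub_right_inj, Int.natCast_inj] at hab; omega
    have := hsumZ.comp_injective hinj
    refine this.congr fun n => ?_
    simp only [Function.comp_apply]
    push_cast
    norm_num
  -- S
  set S : ENNReal := ∑' j : ℤ, ENNReal.ofReal (C₀ * Real.exp (-(δ * |(j:ℝ)| ^ β))) with hSdef
  have hStop : S ≠ ⊤ := by
    rw [hSdef, ← ENNReal.ofReal_tsum_of_nonneg (fun j => (hκpos _).le) (hsumZ.mul_left C₀)]
    exact ENNReal.ofReal_ne_top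
  have hS0 : S ≠ 0 := by
    intro h0
    have h1 : ENNReal.ofReal (C₀ * Real.exp (-(δ * |((0:ℤ):ℝ)| ^ β))) ≤ S := ENNReal.le_tsum (0 : ℤ)
    rw [h0, le_zero_iff, ENNReal.ofReal_eq_zero] at h1
    exact absurd h1 (not_le.mpr (hκpos _))
  have hrow : ∀ m : ℕ, (∑' n : ℕ, ENNReal.ofReal (C₀ * Real.exp (-(δ * |(m:ℝ) - (n:ℝ)| ^ β)))) ≤ S := by
    intro m
    have hinj : Function.Injective (fun n : ℕ => (m:ℤ) - (n:ℤ)) := by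
      intro a b hab; simp only [sub_right_inj, Int.natCast_inj] at hab; omega
    have h1 := ENNReal.tsum_comp_le_tsum_of_injective hinj (fun j : ℤ => ENNReal.ofReal (C₀ * Real.exp (-(δ * |(j:ℝ)| ^ β))))
    refine le_trans (le_of_eq (tsum_congr fun n => ?_)) h1
    push_cast
    norm_num
  have hcol : ∀ n : ℕ, (∑' m : ℕ, ENNReal.ofReal (C₀ * Real.exp (-(δ * |(m:ℝ) - (n:ℝ)| ^ β)))) ≤ S := by
    intro n
    have hinj : Function.Injective (fun m : ℕ => (m:ℤ) - (n:ℤ)) := by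
      intro a b hab; simp only [sub_left_inj, Int.natCast_inj] at hab; omega
    have h1 := ENNReal.tsum_comp_le_tsum_of_injective hinj (fun j : ℤ => ENNReal.ofReal (C₀ * Real.exp (-(δ * |(j:ℝ)| ^ β))))
    refine le_trans (le_of_eq (tsum_congr fun m => ?_)) h1
    push_cast
    norm_num
  refine ⟨S.toReal, ENNReal.toReal_pos hS0 hStop, ?_⟩
  intro f hf
  set c : ℕ → ℝ := fun n => ‖(inner ℂ f (gd n) : ℂ)‖ with hcdef
  set w : ℕ → ℝ := fun n => μ ((n:ℝ) + 1) with hwdef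
  have hw1 : ∀ n, 1 ≤ w n := fun n => hμ1 n
  have hw0 : ∀ n : ℕ, 0 < w n := fun n => hμpos _
  have hc0 : ∀ n, 0 ≤ c n := fun n => norm_nonneg _
  set b : ℕ → ℝ := fun n => c n * w n with hbdef
  have hb0 : ∀ n, 0 ≤ b n := fun n => mul_nonneg (hc0 n) (hw0 n).le
  have hbeq : ∀ n : ℕ, ‖(inner ℂ f (gd n) : ℂ)‖ ^ p * μ ((n:ℝ) + 1) ^ p = b n ^ p := by
    intro n
    exact (Real.mul_rpow (hc0 n) (hw0 n).le).symm
  have hbsum : Summable (fun n => b n ^ p) := hf.congr hbeq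
  set M : ℝ := max 1 (∑' n, b n ^ p) with hMdef
  have hM1 : (1:ℝ) ≤ M := le_max_left _ _
  have hM0 : (0:ℝ) < M := lt_of_lt_of_le one_pos hM1
  have hMb : ∀ n, b n ≤ M := by
    intro n
    rcases le_total (b n) 1 with h | h
    · exact h.trans hM1
    · have h2 : b n ≤ b n ^ p := by
        calc b n = b n ^ (1:ℝ) := (Real.rpow_one _).symm
          _ ≤ b n ^ p := Real.rpow_le_rpow_of_exponent_le h hp
      refine h2.trans (le_trans ?_ (le_max_right _ _))
      exact Summable.le_tsum hbsum n fun i _ => Real.rpow_nonneg (hb0 i) p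
  have hMc : ∀ n, c n ≤ M := fun n =>
    (le_mul_of_one_le_right (hc0 n) (hw1 n)).trans (hMb n)
  -- step 1 : pointwise bound on the analysis coefficients
  have hHS : ∀ m : ℕ, HasSum (fun n => (inner ℂ f (gd n) : ℂ) * (inner ℂ (e m) (g n) : ℂ))
      ((inner ℂ (e m) f : ℂ)) := by
    intro m
    have h1 := (hexp f).mapL (innerSL ℂ (e m))
    simpa [inner_smul_right] using h1
  have hγδ : ∀ s : ℝ, 0 ≤ s → Real.exp (-γ * s ^ β) ≤ Real.exp (-(δ * s ^ β)) := by
    intro s hs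
    apply Real.exp_le_exp.mpr
    have h1 : 0 ≤ s ^ β := Real.rpow_nonneg hs β
    rw [hδdef]; nlinarith
  have hnormle : ∀ m n : ℕ, ‖(inner ℂ f (gd n) : ℂ) * (inner ℂ (e m) (g n) : ℂ)‖
      ≤ (M * C) * Real.exp (-(δ * |(m:ℝ) - (n:ℝ)| ^ β)) := by
    intro m n
    rw [norm_mul]
    have h2 : ‖(inner ℂ (e m) (g n) : ℂ)‖ ≤ C * Real.exp (-(δ * |(m:ℝ) - (n:ℝ)| ^ β)) :=
      (hloc1 m n).trans (mul_le_mul_of_nonneg_left (hγδ _ (abs_nonneg _)) hC.le)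
    calc c n * ‖(inner ℂ (e m) (g n) : ℂ)‖
        ≤ M * (C * Real.exp (-(δ * |(m:ℝ) - (n:ℝ)| ^ β))) :=
          mul_le_mul (hMc n) h2 (norm_nonneg _) hM0.le
      _ = (M * C) * Real.exp (-(δ * |(m:ℝ) - (n:ℝ)| ^ β)) := by ring
  have hshiftN : ∀ m : ℕ, Summable (fun n : ℕ => Real.exp (-(δ * |(m:ℝ) - (n:ℝ)| ^ β))) := by
    intro m
    exact (hshift (m:ℤ)).congr (fun n => by push_cast; norm_num)
  have hsn : ∀ m : ℕ, Summable (fun n => ‖(inner ℂ f (gd n) : ℂ) * (inner ℂ (e m) (g n) : ℂ)‖) := by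
    intro m
    apply Summable.of_nonneg_of_le (fun n => norm_nonneg _) (hnormle m)
    exact (hshiftN m).mul_left (M * C)
  have hRsum : ∀ m : ℕ,
      Summable (fun n : ℕ => (C₀ * Real.exp (-(δ * |(m:ℝ) - (n:ℝ)| ^ β))) * b n) := by
    intro m
    apply Summable.of_nonneg_of_le (fun n => mul_nonneg (hκpos _).le (hb0 n))
      (fun n => mul_le_mul_of_nonneg_left (hMb n) (hκpos _).le)
    exact ((hshiftN m).mul_left C₀).mul_right M
  have key : ∀ m : ℕ, ‖(inner ℂ f (e m) : ℂ)‖ * w m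
      ≤ ∑' n : ℕ, (C₀ * Real.exp (-(δ * |(m:ℝ) - (n:ℝ)| ^ β))) * b n := by
    intro m
    have hLsum : Summable (fun n => ‖(inner ℂ f (gd n) : ℂ) * (inner ℂ (e m) (g n) : ℂ)‖ * w m) :=
      (hsn m).mul_right _
    have h1 : ‖(inner ℂ f (e m) : ℂ)‖
        ≤ ∑' n, ‖(inner ℂ f (gd n) : ℂ) * (inner ℂ (e m) (g n) : ℂ)‖ := by
      rw [norm_inner_symm, ← (hHS m).tsum_eq]
      exact norm_tsum_le_tsum_norm (hsn m)
    calc ‖(inner ℂ f (e m) : ℂ)‖ * w m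
        ≤ (∑' n, ‖(inner ℂ f (gd n) : ℂ) * (inner ℂ (e m) (g n) : ℂ)‖) * w m :=
          mul_le_mul_of_nonneg_right h1 (hw0 m).le
      _ = ∑' n, ‖(inner ℂ f (gd n) : ℂ) * (inner ℂ (e m) (g n) : ℂ)‖ * w m := tsum_mul_right.symm
      _ ≤ ∑' n : ℕ, (C₀ * Real.exp (-(δ * |(m:ℝ) - (n:ℝ)| ^ β))) * b n := by
          apply Summable.tsum_le_tsum ?_ hLsum (hRsum m)
          intro n
          rw [norm_mul]
          have e2 : w m ≤ Cμ * Real.exp (γ' * |(m:ℝ) - (n:ℝ)| ^ βμ) * w n := by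
            have h := hμsub ((m:ℝ) - (n:ℝ)) ((n:ℝ) + 1)
            rw [show (m:ℝ) - (n:ℝ) + ((n:ℝ) + 1) = (m:ℝ) + 1 by ring] at h
            exact h
          calc c n * ‖(inner ℂ (e m) (g n) : ℂ)‖ * w m
              ≤ c n * (C * Real.exp (-γ * |(m:ℝ) - (n:ℝ)| ^ β)) *
                  (Cμ * Real.exp (γ' * |(m:ℝ) - (n:ℝ)| ^ βμ) * w n) := by
                apply mul_le_mul
                  (mul_le_mul_of_nonneg_left (hloc1 m n) (hc0 n)) e2 (hw0 m).le
                positivity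
            _ = (C * Real.exp (-γ * |(m:ℝ) - (n:ℝ)| ^ β) *
                  (Cμ * Real.exp (γ' * |(m:ℝ) - (n:ℝ)| ^ βμ))) * b n := by
                rw [hbdef]; ring
            _ ≤ (C₀ * Real.exp (-(δ * |(m:ℝ) - (n:ℝ)| ^ β))) * b n :=
                mul_le_mul_of_nonneg_right (hker m n) (hb0 n)
  -- ENNReal stage
  set kE : ℕ → ℕ → ENNReal :=
    fun m n => ENNReal.ofReal (C₀ * Real.exp (-(δ * |(m:ℝ) - (n:ℝ)| ^ β))) with hkEdef
  have hkE0 : ∀ m n, kE m n ≠ 0 := by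
    intro m n
    simp only [hkEdef, ne_eq, ENNReal.ofReal_eq_zero, not_le]
    exact hκpos _
  have hkEtop : ∀ m n, kE m n ≠ ⊤ := fun m n => ENNReal.ofReal_ne_top
  set B' : ℕ → ENNReal := fun n => ENNReal.ofReal (b n) with hBdef
  have hAm : ∀ m : ℕ, ENNReal.ofReal ((‖(inner ℂ f (e m) : ℂ)‖ * w m) ^ p)
      ≤ S ^ (p - 1) * ∑' n, kE m n * (B' n) ^ p := by
    intro m
    have h1 : ENNReal.ofReal (‖(inner ℂ f (e m) : ℂ)‖ * w m) ≤ ∑' n, kE m n * B' n := by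
      refine le_trans (ENNReal.ofReal_le_ofReal (key m)) ?_
      rw [ENNReal.ofReal_tsum_of_nonneg (fun n => mul_nonneg (hκpos _).le (hb0 n)) (hRsum m)]
      exact le_of_eq (tsum_congr fun n => ENNReal.ofReal_mul (hκpos _).le)
    have h2 := aux_schur_step' p hp (kE m) B' (hkE0 m) (hkEtop m)
    calc ENNReal.ofReal ((‖(inner ℂ f (e m) : ℂ)‖ * w m) ^ p)
        = (ENNReal.ofReal (‖(inner ℂ f (e m) : ℂ)‖ * w m)) ^ p :=
          (ENNReal.ofReal_rpow_of_nonneg (mul_nonneg (norm_nonneg _) (hw0 m).le) hp0.le).symm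
      _ ≤ (∑' n, kE m n * B' n) ^ p := ENNReal.rpow_le_rpow h1 hp0.le
      _ ≤ (∑' n, kE m n) ^ (p - 1) * ∑' n, kE m n * (B' n) ^ p := h2
      _ ≤ S ^ (p - 1) * ∑' n, kE m n * (B' n) ^ p := by
          exact mul_le_mul_left (ENNReal.rpow_le_rpow (hrow m) (by linarith)) _
  have total : (∑' m : ℕ, ENNReal.ofReal ((‖(inner ℂ f (e m) : ℂ)‖ * w m) ^ p))
      ≤ S ^ p * ∑' n : ℕ, ENNReal.ofReal (b n ^ p) := by
    calc (∑' m : ℕ, ENNReal.ofReal ((‖(inner ℂ f (e m) : ℂ)‖ * w m) ^ p))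
        ≤ ∑' m : ℕ, S ^ (p - 1) * ∑' n, kE m n * (B' n) ^ p := ENNReal.tsum_le_tsum hAm
      _ = S ^ (p - 1) * ∑' m : ℕ, ∑' n, kE m n * (B' n) ^ p := ENNReal.tsum_mul_left
      _ = S ^ (p - 1) * ∑' n : ℕ, ∑' m, kE m n * (B' n) ^ p := by rw [ENNReal.tsum_comm]
      _ = S ^ (p - 1) * ∑' n : ℕ, (∑' m, kE m n) * (B' n) ^ p := by
          refine congrArg _ (tsum_congr fun n => ?_)
          exact ENNReal.tsum_mul_right
      _ ≤ S ^ (p - 1) * ∑' n : ℕ, S * (B' n) ^ p := by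
          refine mul_le_mul_right (ENNReal.tsum_le_tsum fun n => ?_) _
          exact mul_le_mul_left (hcol n) _
      _ = S ^ (p - 1) * (S * ∑' n : ℕ, (B' n) ^ p) := by rw [ENNReal.tsum_mul_left]
      _ = S ^ p * ∑' n : ℕ, (B' n) ^ p := by
          rw [← mul_assoc]
          congr 1
          calc S ^ (p - 1) * S = S ^ (p - 1) * S ^ (1:ℝ) := by rw [ENNReal.rpow_one]
            _ = S ^ (p - 1 + 1) := (ENNReal.rpow_add _ _ hS0 hStop).symm
            _ = S ^ p := by ring_nf
      _ = S ^ p * ∑' n : ℕ, ENNReal.ofReal (b n ^ p) := by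
          refine congrArg _ (tsum_congr fun n => ?_)
          exact ENNReal.ofReal_rpow_of_nonneg (hb0 n) hp0.le
  have hofb : (∑' n : ℕ, ENNReal.ofReal (b n ^ p)) = ENNReal.ofReal (∑' n, b n ^ p) :=
    (ENNReal.ofReal_tsum_of_nonneg (fun n => Real.rpow_nonneg (hb0 n) p) hbsum).symm
  have hRHSne : S ^ p * (∑' n : ℕ, ENNReal.ofReal (b n ^ p)) ≠ ⊤ := by
    rw [hofb]
    exact ENNReal.mul_ne_top (ENNReal.rpow_ne_top_of_nonneg hp0.le hStop) ENNReal.ofReal_ne_top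
  have hfin : (∑' m : ℕ, ENNReal.ofReal ((‖(inner ℂ f (e m) : ℂ)‖ * w m) ^ p)) ≠ ⊤ :=
    ne_top_of_le_ne_top hRHSne total
  have heq : ∀ m : ℕ, ‖(inner ℂ f (e m) : ℂ)‖ ^ p * μ ((m:ℝ) + 1) ^ p
      = (‖(inner ℂ f (e m) : ℂ)‖ * w m) ^ p := fun m =>
    (Real.mul_rpow (norm_nonneg _) (hw0 m).le).symm
  have hsummable : Summable (fun m : ℕ => ‖(inner ℂ f (e m) : ℂ)‖ ^ p * μ ((m:ℝ) + 1) ^ p) := by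
    have h1 := ENNReal.summable_toReal hfin
    refine h1.congr fun m => ?_
    rw [ENNReal.toReal_ofReal (Real.rpow_nonneg (mul_nonneg (norm_nonneg _) (hw0 m).le) p)]
    exact (heq m).symm
  refine ⟨hsummable, ?_⟩
  have hsum2 : Summable (fun m : ℕ => (‖(inner ℂ f (e m) : ℂ)‖ * w m) ^ p) :=
    hsummable.congr heq
  calc ∑' m : ℕ, ‖(inner ℂ f (e m) : ℂ)‖ ^ p * μ ((m:ℝ) + 1) ^ p
      = ∑' m : ℕ, (‖(inner ℂ f (e m) : ℂ)‖ * w m) ^ p := tsum_congr heq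
    _ = (∑' m : ℕ, ENNReal.ofReal ((‖(inner ℂ f (e m) : ℂ)‖ * w m) ^ p)).toReal := by
        rw [← ENNReal.ofReal_tsum_of_nonneg
          (fun m => Real.rpow_nonneg (mul_nonneg (norm_nonneg _) (hw0 m).le) p) hsum2]
        rw [ENNReal.toReal_ofReal
          (tsum_nonneg fun m => Real.rpow_nonneg (mul_nonneg (norm_nonneg _) (hw0 m).le) p)]
    _ ≤ (S ^ p * ∑' n : ℕ, ENNReal.ofReal (b n ^ p)).toReal := ENNReal.toReal_mono hRHSne total
    _ = S.toReal ^ p * ∑' n : ℕ, b n ^ p := by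
        rw [hofb, ENNReal.toReal_mul, ENNReal.toReal_rpow,
          ENNReal.toReal_ofReal (tsum_nonneg fun n => Real.rpow_nonneg (hb0 n) p)]
    _ = S.toReal ^ p * ∑' n : ℕ, ‖(inner ℂ f (gd n) : ℂ)‖ ^ p * μ ((n:ℝ) + 1) ^ p := by
        rw [tsum_congr hbeq]
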